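/- Let κ₁, κ₂, κ₃ ∈ (−1/2, 1/2) and k, j ∈ {0, 1}. There exists C > 0 such that for every η ∈ ℝ, ∬_{ℝ²} ⟨η+η₂⟩^{−2+k} ⟨η₃−η₁⟩^{−2+j} ⟨η₁⟩^{−κ₁−1/2−j} ⟨η₂⟩^{−κ₂−1/2−k} ⟨η₃⟩^{−κ₃−1/2} dη₁dη₂ ≤ C ⟨η⟩^{−3/2−κ₁−κ₂−κ₃}, where η₃ := η − η₁ − η₂. -/

import Mathlib

open MeasureTheory Filter

noncomputable section

/-- Japanese bracket `⟨x⟩ = (1+x²)^{1/2}`. -/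
def jap (x : ℝ) : ℝ := Real.sqrt (1 + x ^ 2)

/-- Real (odd) cube root. -/
def cbrt (x : ℝ) : ℝ := Real.sign x * |x| ^ ((1 : ℝ) / 3)

/-- Membership in the space `Z^κ`. -/
def MemZ (κ : ℝ) (z : ℝ → ℂ) : Prop :=
  Differentiable ℝ z ∧
    BddAbove (Set.range fun ξ : ℝ => jap ξ ^ κ * ‖z ξ‖) ∧
    BddAbove (Set.range fun ξ : ℝ => jap ξ ^ (κ + 1) * ‖deriv z ξ‖)

/-- The `Z^κ` norm. -/
def ZNorm (κ : ℝ) (z : ℝ → ℂ) : ℝ :=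
  (⨆ ξ : ℝ, jap ξ ^ κ * ‖z ξ‖) + ⨆ ξ : ℝ, jap ξ ^ (κ + 1) * ‖deriv z ξ‖

/-- Membership in the space `Y^κ`. -/
def MemY (κ : ℝ) (z : ℝ → ℂ) : Prop :=
  (∀ ξ : ℝ, ξ ≠ 0 → DifferentiableAt ℝ z ξ) ∧
    BddAbove ((fun ξ : ℝ => ‖z ξ‖ / abs (Real.log (abs ξ))) '' {ξ : ℝ | 0 < |ξ| ∧ |ξ| ≤ 1 / 2}) ∧
    BddAbove ((fun ξ : ℝ => |ξ| * ‖deriv z ξ‖) '' {ξ : ℝ | 0 < |ξ| ∧ |ξ| ≤ 1 / 2}) ∧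
    BddAbove ((fun ξ : ℝ => jap ξ ^ κ * ‖z ξ‖) '' {ξ : ℝ | 1 / 2 ≤ |ξ|}) ∧
    BddAbove ((fun ξ : ℝ => jap ξ ^ (κ + 1) * ‖deriv z ξ‖) '' {ξ : ℝ | 1 / 2 ≤ |ξ|})

/-- The `Y^κ` norm. -/
def YNorm (κ : ℝ) (z : ℝ → ℂ) : ℝ :=
  sSup ((fun ξ : ℝ => ‖z ξ‖ / abs (Real.log (abs ξ))) '' {ξ : ℝ | 0 < |ξ| ∧ |ξ| ≤ 1 / 2}) +
    sSup ((fun ξ : ℝ => |ξ| * ‖deriv z ξ‖) '' {ξ : ℝ | 0 < |ξ| ∧ |ξ| ≤ 1 / 2}) +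
    sSup ((fun ξ : ℝ => jap ξ ^ κ * ‖z ξ‖) '' {ξ : ℝ | 1 / 2 ≤ |ξ|}) +
    sSup ((fun ξ : ℝ => jap ξ ^ (κ + 1) * ‖deriv z ξ‖) '' {ξ : ℝ | 1 / 2 ≤ |ξ|})

/-- Improper integral over `ℝ²`, as the limit of integrals over `[-R,R]²`. -/
def HasImproper2 (F : ℝ → ℝ → ℂ) (L : ℂ) : Prop :=
  Tendsto (fun R : ℝ => ∫ x in (-R)..R, ∫ y in (-R)..R, F x y) atTop (nhds L)

/-- Improper integral over `ℝ³`, as the limit of integrals over `[-R,R]³`. -/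
def HasImproper3 (F : ℝ → ℝ → ℝ → ℂ) (L : ℂ) : Prop :=
  Tendsto (fun R : ℝ => ∫ x in (-R)..R, ∫ y in (-R)..R, ∫ t in (-R)..R, F x y t)
    atTop (nhds L)

/-- Integrand of the quadrilinear operator `M` (quartic KdV). -/
def Mker (f₁ f₂ f₃ f₄ : ℝ → ℂ) (η η₁ η₂ η₃ : ℝ) : ℂ :=
  Complex.exp (-(Complex.I) *
      ((η ^ 3 - η₁ ^ 3 - η₂ ^ 3 - η₃ ^ 3 - (η - η₁ - η₂ - η₃) ^ 3 : ℝ) : ℂ)) *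
    (f₁ η₁ * f₂ η₂ * f₃ η₃ * f₄ (η - η₁ - η₂ - η₃)) /
    ((cbrt (η₁ * η₂ * η₃ * (η - η₁ - η₂ - η₃)) : ℝ) : ℂ)

/-- Integrand of the trilinear operator `I` (modified Benjamin–Ono). -/
def Iker (g₁ g₂ g₃ : ℝ → ℂ) (η η₁ η₂ : ℝ) : ℂ :=
  Complex.exp (Complex.I *
      ((η * |η| - η₁ * |η₁| - η₂ * |η₂| - (η - η₁ - η₂) * |η - η₁ - η₂| : ℝ) : ℂ)) *
    (g₁ η₁ * g₂ η₂ * g₃ (η - η₁ - η₂)) /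
    ((Real.sqrt |η₁ * η₂ * (η - η₁ - η₂)| : ℝ) : ℂ)

/-- Integrand of the trilinear operator `T` (cubic NLS). -/
def Tker (h₁ h₂ h₃ : ℝ → ℂ) (η η₁ η₂ : ℝ) : ℂ :=
  Complex.exp (-(Complex.I) *
      ((η ^ 2 - η₁ ^ 2 + η₂ ^ 2 - (η - η₁ - η₂) ^ 2 : ℝ) : ℂ)) *
    (h₁ η₁ * (starRingEnd ℂ) (h₂ η₂) * h₃ (η - η₁ - η₂))

/-- The 4KdV high-frequency ansatz `S_A`. -/
def SA (χ : ℝ → ℝ) (A : ℂ) (ξ : ℝ) : ℂ :=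
  A * (χ ξ : ℂ) + (starRingEnd ℂ) A * (χ (-ξ) : ℂ)

/-- The mBO ansatz `S_{A,a,B}` for positive frequencies. -/
def SabPos (χ : ℝ → ℝ) (A B : ℂ) (a : ℝ) (ξ : ℝ) : ℂ :=
  (A * Complex.exp (Complex.I * ((a * Real.log ξ : ℝ) : ℂ)) +
      B * Complex.exp (Complex.I * ((2 * ξ ^ 2 / 3 + 3 * a * Real.log ξ : ℝ) : ℂ)) /
        ((ξ ^ 2 : ℝ) : ℂ)) *
    ((χ ξ : ℝ) : ℂ)

/-- The mBO ansatz `S_{A,a,B}`. -/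
def Sab (χ : ℝ → ℝ) (A B : ℂ) (a : ℝ) (ξ : ℝ) : ℂ :=
  if 0 < ξ then SabPos χ A B a ξ
  else if ξ < 0 then (starRingEnd ℂ) (SabPos χ A B a (-ξ))
  else 0

/-- The NLS ansatz `S_A`. -/
def SAnls (χ : ℝ → ℝ) (A : ℂ) (ξ : ℝ) : ℂ :=
  A * Complex.exp (-(Complex.I) * ((‖A‖ ^ 2 / (2 * Real.pi) * Real.log |ξ| : ℝ) : ℂ)) *
      ((χ ξ : ℝ) : ℂ) +
    A * Complex.exp (Complex.I * ((‖A‖ ^ 2 / (2 * Real.pi) * Real.log |ξ| : ℝ) : ℂ)) *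
      ((χ (-ξ) : ℝ) : ℂ)


open Set
open scoped ENNReal NNReal

set_option maxHeartbeats 1000000

lemma jap_pos (x : ℝ) : 0 < jap x := Real.sqrt_pos.2 (by positivity)

lemma jap_one_le (x : ℝ) : 1 ≤ jap x := by
  rw [show (1:ℝ) = Real.sqrt 1 by simp [Real.sqrt_one]]
  exact Real.sqrt_le_sqrt (by nlinarith)

lemma jap_abs_le (x : ℝ) : |x| ≤ jap x := by
  rw [show |x| = Real.sqrt (x^2) by rw [Real.sqrt_sq_eq_abs]]
  exact Real.sqrt_le_sqrt (by nlinarith)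

lemma jap_neg (x : ℝ) : jap (-x) = jap x := by simp [jap, neg_sq]

lemma jap_comp {x y t : ℝ} (ht : 1 ≤ t) (h : |x| ≤ t * |y|) : jap x ≤ t * jap y := by
  have h2 : x ^ 2 ≤ t ^ 2 * y ^ 2 := by
    have := abs_nonneg x
    nlinarith [abs_nonneg y, sq_abs x, sq_abs y]
  have : jap x ≤ Real.sqrt (t ^ 2 * (1 + y ^ 2)) := Real.sqrt_le_sqrt (by nlinarith)
  calc jap x ≤ Real.sqrt (t ^ 2 * (1 + y ^ 2)) := this
    _ = t * jap y := by
        rw [Real.sqrt_mul (by positivity), Real.sqrt_sq (by linarith)]; rfl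

lemma one_add_abs_le_sqrt_two_mul_jap (x : ℝ) : 1 + |x| ≤ Real.sqrt 2 * jap x := by
  have : Real.sqrt 2 * jap x = Real.sqrt (2 * (1 + x^2)) := by
    rw [Real.sqrt_mul (by norm_num)]; rfl
  rw [this, show (1 + |x|) = Real.sqrt ((1+|x|)^2) by rw [Real.sqrt_sq (by positivity)]]
  exact Real.sqrt_le_sqrt (by nlinarith [abs_nonneg x, sq_abs x, sq_nonneg (1 - |x|)])

lemma rpow_neg_le {u v e : ℝ} (hu : 0 < u) (huv : u ≤ v) (he : 0 ≤ e) :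
    v ^ (-e) ≤ u ^ (-e) :=
  Real.rpow_le_rpow_of_nonpos hu huv (by linarith)

lemma rpow_neg_extract {u w t e : ℝ} (hu : 0 < u) (hw : 0 < w) (ht : 0 < t)
    (h : w ≤ t * u) (he : 0 ≤ e) : u ^ (-e) ≤ t ^ e * w ^ (-e) := by
  have h1 : w / t ≤ u := by rw [div_le_iff₀ ht]; linarith [h, mul_comm t u]
  have h2 : u ^ (-e) ≤ (w / t) ^ (-e) := rpow_neg_le (by positivity) h1 he
  calc u ^ (-e) ≤ (w / t) ^ (-e) := h2
    _ = t ^ e * w ^ (-e) := by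
        rw [Real.div_rpow hw.le ht.le, Real.rpow_neg hw.le, Real.rpow_neg ht.le]
        have hte : (0:ℝ) < t ^ e := Real.rpow_pos_of_pos ht e
        have hwe : (0:ℝ) < w ^ e := Real.rpow_pos_of_pos hw e
        field_simp

lemma jap_extract {w x t e : ℝ} (ht : 1 ≤ t) (h : jap w ≤ t * jap x) (he : 0 ≤ e) :
    jap x ^ (-e) ≤ t ^ e * jap w ^ (-e) :=
  rpow_neg_extract (jap_pos x) (jap_pos w) (lt_of_lt_of_le one_pos ht) h he

lemma jap_continuous : Continuous jap :=
  Real.continuous_sqrt.comp (by continuity)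

lemma jap_rpow_continuous (e : ℝ) : Continuous fun x : ℝ => jap x ^ e :=
  jap_continuous.rpow_const fun x => Or.inl (jap_pos x).ne'

lemma jap_rpow_pos (x e : ℝ) : 0 < jap x ^ e := Real.rpow_pos_of_pos (jap_pos x) e

lemma jap_rpow_nonneg (x e : ℝ) : 0 ≤ jap x ^ e := (jap_rpow_pos x e).le

lemma jap_rpow_le_one {x e : ℝ} (he : 0 ≤ e) : jap x ^ (-e) ≤ 1 :=
  Real.rpow_le_one_of_one_le_of_nonpos (jap_one_le x) (by linarith)

lemma jap_exp_mono {x : ℝ} {e f : ℝ} (h : e ≤ f) : jap x ^ e ≤ jap x ^ f :=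
  Real.rpow_le_rpow_of_exponent_le (jap_one_le x) h

lemma one_le_jap_rpow {x e : ℝ} (he : 0 ≤ e) : 1 ≤ jap x ^ e := by
  calc (1:ℝ) = jap x ^ (0:ℝ) := (Real.rpow_zero _).symm
    _ ≤ jap x ^ e := jap_exp_mono he

lemma lint_jap_bound {r : ℝ} (hr : 1 < r) :
    ∃ C > 0, ∀ d : ℝ, ∫⁻ x : ℝ, ENNReal.ofReal (jap (x - d) ^ (-r)) ≤ ENNReal.ofReal C := by
  have hfin : (Module.finrank ℝ ℝ : ℝ) < r := by simp [Module.finrank_self]; exact_mod_cast hr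
  have hint : Integrable (fun x : ℝ => (1 + ‖x‖) ^ (-r)) := integrable_one_add_norm hfin
  have hint2 : Integrable (fun x : ℝ => Real.sqrt 2 ^ r * (1 + ‖x‖) ^ (-r)) := hint.const_mul _
  set I : ℝ := ∫ x : ℝ, Real.sqrt 2 ^ r * (1 + ‖x‖) ^ (-r) with hI
  have hnn : 0 ≤ᵐ[volume] fun x : ℝ => Real.sqrt 2 ^ r * (1 + ‖x‖) ^ (-r) := by
    filter_upwards with x
    have : (0:ℝ) < 1 + ‖x‖ := by positivity
    positivity
  refine ⟨I + 1, ?_, fun d => ?_⟩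
  · have : 0 ≤ I := integral_nonneg fun x => by
      have : (0:ℝ) < 1 + ‖x‖ := by positivity
      positivity
    linarith
  · have hmp : MeasurePreserving (fun x : ℝ => x - d) volume volume :=
      measurePreserving_sub_right volume d
    have hmeas : Measurable fun x : ℝ => ENNReal.ofReal (jap x ^ (-r)) :=
      (jap_rpow_continuous (-r)).measurable.ennreal_ofReal
    rw [show (fun x : ℝ => ENNReal.ofReal (jap (x - d) ^ (-r)))
        = (fun x : ℝ => ENNReal.ofReal (jap x ^ (-r))) ∘ (fun x : ℝ => x - d) from rfl]
    rw [show (∫⁻ x : ℝ, ((fun x : ℝ => ENNReal.ofReal (jap x ^ (-r))) ∘ (fun x : ℝ => x - d)) x)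
        = ∫⁻ x : ℝ, ENNReal.ofReal (jap x ^ (-r)) from hmp.lintegral_comp hmeas]
    have hpt : ∀ x : ℝ, jap x ^ (-r) ≤ Real.sqrt 2 ^ r * (1 + ‖x‖) ^ (-r) := by
      intro x
      have h1 : (0:ℝ) < 1 + |x| := by positivity
      have h2 := one_add_abs_le_sqrt_two_mul_jap x
      have := rpow_neg_extract (jap_pos x) h1 (by positivity : (0:ℝ) < Real.sqrt 2) h2
        (by linarith : (0:ℝ) ≤ r)
      simpa [Real.norm_eq_abs] using this
    calc ∫⁻ x : ℝ, ENNReal.ofReal (jap x ^ (-r))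
        ≤ ∫⁻ x : ℝ, ENNReal.ofReal (Real.sqrt 2 ^ r * (1 + ‖x‖) ^ (-r)) :=
          lintegral_mono fun x => ENNReal.ofReal_le_ofReal (hpt x)
      _ = ENNReal.ofReal I := (ofReal_integral_eq_lintegral_ofReal hint2 hnn).symm
      _ ≤ ENNReal.ofReal (I + 1) := ENNReal.ofReal_le_ofReal (by linarith)

lemma kernel_sum_bound {A x t : ℝ} (ht : t = 0 ∨ t = 1) :
    jap A ^ (-(2 - t)) * jap x ^ (-t) ≤ jap A ^ (-(2:ℝ)) + jap x ^ (-(2:ℝ)) := by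
  rcases ht with h | h <;> subst h
  · simp only [sub_zero, neg_zero, Real.rpow_zero, mul_one]
    exact le_add_of_nonneg_right (jap_rpow_pos _ _).le
  · have hA := jap_pos A
    have hx := jap_pos x
    have h1 : jap A ^ (-(2 - (1:ℝ))) = (jap A)⁻¹ := by norm_num [Real.rpow_neg_one]
    have h2 : jap x ^ (-(1:ℝ)) = (jap x)⁻¹ := Real.rpow_neg_one _
    have h3 : jap A ^ (-(2:ℝ)) = (jap A ^ 2)⁻¹ := by
      rw [Real.rpow_neg hA.le, show (2:ℝ) = ((2:ℕ):ℝ) by norm_num, Real.rpow_natCast]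
    have h4 : jap x ^ (-(2:ℝ)) = (jap x ^ 2)⁻¹ := by
      rw [Real.rpow_neg hx.le, show (2:ℝ) = ((2:ℕ):ℝ) by norm_num, Real.rpow_natCast]
    rw [h1, h2, h3, h4]
    rcases le_total (jap A) (jap x) with h | h
    · calc (jap A)⁻¹ * (jap x)⁻¹ ≤ (jap A)⁻¹ * (jap A)⁻¹ :=
            mul_le_mul_of_nonneg_left (inv_anti₀ hA h) (by positivity)
        _ = (jap A ^ 2)⁻¹ := by rw [sq, mul_inv]
        _ ≤ _ := le_add_of_nonneg_right (by positivity)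
    · calc (jap A)⁻¹ * (jap x)⁻¹ ≤ (jap x)⁻¹ * (jap x)⁻¹ :=
            mul_le_mul_of_nonneg_right (inv_anti₀ hx h) (by positivity)
        _ = (jap x ^ 2)⁻¹ := by rw [sq, mul_inv]
        _ ≤ _ := le_add_of_nonneg_left (by positivity)

lemma lemG (α β q r t : ℝ) (hα : 1 ≤ |α|) (ht : t = 0 ∨ t = 1)
    (hq0 : 0 < q) (hq1 : q < 1) (hr0 : 0 < r) (hr2 : r < 2)
    (hgeom : ∀ w x : ℝ, |x| ≤ |w|/4 ∨ |w - x| ≤ |w|/4 → |w|/2 ≤ |α*x+β*w|) :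
    ∃ C > 0, ∀ w : ℝ, ∫⁻ x : ℝ, ENNReal.ofReal
        (jap (α*x+β*w) ^ (-(2-t)) * jap x ^ (-(q+t)) * jap (w-x) ^ (-r))
      ≤ ENNReal.ofReal (C * jap w ^ (-(q+r))) := by
  have ht0 : 0 ≤ t := by rcases ht with h | h <;> norm_num [h]
  have ht1 : t ≤ 1 := by rcases ht with h | h <;> norm_num [h]
  obtain ⟨C2, hC2pos, hC2⟩ := lint_jap_bound (show (1:ℝ) < 2 by norm_num)
  -- claim 2 : integral of middle factor over small-|x| region
  have claim2 : ∃ D > 0, ∀ w : ℝ,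
      ∫⁻ x in Icc (-(|w|/4)) (|w|/4), ENNReal.ofReal (jap x ^ (-(q+t)))
        ≤ ENNReal.ofReal (D * jap w ^ (1-t)) := by
    rcases ht with h | h
    · refine ⟨1, one_pos, fun w => ?_⟩
      calc ∫⁻ x in Icc (-(|w|/4)) (|w|/4), ENNReal.ofReal (jap x ^ (-(q+t)))
          ≤ ∫⁻ x in Icc (-(|w|/4)) (|w|/4), (1 : ℝ≥0∞) := by
            refine setLIntegral_mono measurable_const fun x _ => ?_
            rw [← ENNReal.ofReal_one]
            exact ENNReal.ofReal_le_ofReal (jap_rpow_le_one (by linarith))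
        _ = volume (Icc (-(|w|/4)) (|w|/4)) := by simp
        _ = ENNReal.ofReal (|w|/2) := by rw [Real.volume_Icc]; congr 1; ring
        _ ≤ ENNReal.ofReal (1 * jap w ^ (1-t)) := by
            apply ENNReal.ofReal_le_ofReal
            rw [one_mul, h, sub_zero, Real.rpow_one]
            linarith [jap_abs_le w, abs_nonneg w]
    · obtain ⟨Cq, hCqpos, hCq⟩ := lint_jap_bound (show (1:ℝ) < q + t by rw [h]; linarith)
      refine ⟨Cq, hCqpos, fun w => ?_⟩
      calc ∫⁻ x in Icc (-(|w|/4)) (|w|/4), ENNReal.ofReal (jap x ^ (-(q+t)))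
          ≤ ∫⁻ x : ℝ, ENNReal.ofReal (jap x ^ (-(q+t))) := setLIntegral_le_lintegral _ _
        _ = ∫⁻ x : ℝ, ENNReal.ofReal (jap (x - 0) ^ (-(q+t))) := by simp
        _ ≤ ENNReal.ofReal Cq := hCq 0
        _ = ENNReal.ofReal (Cq * jap w ^ (1-t)) := by rw [h]; norm_num
  obtain ⟨D2, hD2pos, hD2⟩ := claim2
  -- claim 3 : integral of third factor over region near w
  have claim3 : ∃ D > 0, ∀ w : ℝ,
      ∫⁻ x in Icc (w - |w|/4) (w + |w|/4), ENNReal.ofReal (jap (w - x) ^ (-r))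
        ≤ ENNReal.ofReal (D * jap w ^ (2-r)) := by
    rcases le_or_gt r 1 with h | h
    · refine ⟨1, one_pos, fun w => ?_⟩
      calc ∫⁻ x in Icc (w - |w|/4) (w + |w|/4), ENNReal.ofReal (jap (w - x) ^ (-r))
          ≤ ∫⁻ x in Icc (w - |w|/4) (w + |w|/4), (1 : ℝ≥0∞) := by
            refine setLIntegral_mono measurable_const fun x _ => ?_
            rw [← ENNReal.ofReal_one]
            exact ENNReal.ofReal_le_ofReal (jap_rpow_le_one hr0.le)
        _ = volume (Icc (w - |w|/4) (w + |w|/4)) := by simp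
        _ = ENNReal.ofReal (|w|/2) := by rw [Real.volume_Icc]; congr 1; ring
        _ ≤ ENNReal.ofReal (1 * jap w ^ (2-r)) := by
            apply ENNReal.ofReal_le_ofReal
            rw [one_mul]
            calc |w|/2 ≤ jap w ^ (1:ℝ) := by
                  rw [Real.rpow_one]; linarith [jap_abs_le w, abs_nonneg w]
              _ ≤ jap w ^ (2-r) := jap_exp_mono (by linarith)
    · obtain ⟨Cr, hCrpos, hCr⟩ := lint_jap_bound h
      refine ⟨Cr, hCrpos, fun w => ?_⟩
      calc ∫⁻ x in Icc (w - |w|/4) (w + |w|/4), ENNReal.ofReal (jap (w - x) ^ (-r))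
          ≤ ∫⁻ x : ℝ, ENNReal.ofReal (jap (w - x) ^ (-r)) := setLIntegral_le_lintegral _ _
        _ = ∫⁻ x : ℝ, ENNReal.ofReal (jap (x - w) ^ (-r)) := by
            refine lintegral_congr fun x => ?_
            rw [show w - x = -(x - w) by ring, jap_neg]
        _ ≤ ENNReal.ofReal Cr := hCr w
        _ ≤ ENNReal.ofReal (Cr * jap w ^ (2-r)) := by
            apply ENNReal.ofReal_le_ofReal
            nlinarith [one_le_jap_rpow (x := w) (e := 2-r) (by linarith), hCrpos]
  obtain ⟨D3, hD3pos, hD3⟩ := claim3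
  have h4q : (0:ℝ) < 4 ^ q := by positivity
  have h4r : (0:ℝ) < 4 ^ r := by positivity
  have h43r : (0:ℝ) < (4/3 : ℝ) ^ r := by positivity
  have h43qt : (0:ℝ) < (4/3 : ℝ) ^ (q+t) := by positivity
  refine ⟨4 ^ q * 4 ^ r * (2 * C2) + 4 * (4/3) ^ r * D2 + (4/3) ^ (q+t) * 4 * D3,
    by positivity, fun w => ?_⟩
  set F : ℝ → ℝ≥0∞ := fun x => ENNReal.ofReal
    (jap (α*x+β*w) ^ (-(2-t)) * jap x ^ (-(q+t)) * jap (w-x) ^ (-r)) with hF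
  set L : ℝ := |w|/4 with hLdef
  have hL0 : 0 ≤ L := by positivity
  set S1 : Set ℝ := {x : ℝ | L ≤ |x| ∧ L ≤ |w - x|} with hS1def
  set S2 : Set ℝ := Icc (-L) L with hS2def
  set S3 : Set ℝ := Icc (w - L) (w + L) with hS3def
  have hS1m : MeasurableSet S1 := by
    have h1 : IsClosed {x : ℝ | L ≤ |x|} := isClosed_le continuous_const continuous_abs
    have h2 : IsClosed {x : ℝ | L ≤ |w - x|} :=
      isClosed_le continuous_const ((continuous_const.sub continuous_id).abs)
    exact (h1.inter h2).measurableSet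
  have hS2m : MeasurableSet S2 := measurableSet_Icc
  have hS3m : MeasurableSet S3 := measurableSet_Icc
  have hFc : Continuous fun x : ℝ =>
      jap (α*x+β*w) ^ (-(2-t)) * jap x ^ (-(q+t)) * jap (w-x) ^ (-r) := by
    refine Continuous.mul (Continuous.mul ?_ ?_) ?_
    · exact (jap_rpow_continuous _).comp (by continuity)
    · exact jap_rpow_continuous _
    · exact (jap_rpow_continuous _).comp (by continuity)
  have hFm : Measurable F := hFc.measurable.ennreal_ofReal
  -- covering
  have hcov : ∀ x : ℝ, F x ≤ S1.indicator F x + S2.indicator F x + S3.indicator F x := by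
    intro x
    by_cases h2 : |x| ≤ L
    · have hx : x ∈ S2 := by
        rw [hS2def, mem_Icc]
        obtain ⟨ha, hb⟩ := abs_le.mp h2
        exact ⟨ha, hb⟩
      calc F x = S2.indicator F x := (indicator_of_mem hx F).symm
        _ ≤ S1.indicator F x + S2.indicator F x := le_add_left le_rfl
        _ ≤ _ := le_add_right le_rfl
    · by_cases h3 : |w - x| ≤ L
      · have hx : x ∈ S3 := by
          rw [hS3def, mem_Icc]
          obtain ⟨ha, hb⟩ := abs_le.mp h3
          constructor <;> linarith
        calc F x = S3.indicator F x := (indicator_of_mem hx F).symm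
          _ ≤ _ := le_add_left le_rfl
      · have hx : x ∈ S1 := ⟨(not_le.mp h2).le, (not_le.mp h3).le⟩
        calc F x = S1.indicator F x := (indicator_of_mem hx F).symm
          _ ≤ S1.indicator F x + S2.indicator F x := le_add_right le_rfl
          _ ≤ _ := le_add_right le_rfl
  -- region bounds
  have hB1 : ∫⁻ x in S1, F x ≤
      ENNReal.ofReal (4 ^ q * 4 ^ r * (2 * C2) * jap w ^ (-(q+r))) := by
    have hpt : ∀ x ∈ S1, jap (α*x+β*w) ^ (-(2-t)) * jap x ^ (-(q+t)) * jap (w-x) ^ (-r)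
        ≤ (4 ^ q * 4 ^ r * jap w ^ (-(q+r))) *
          (jap (α*x+β*w) ^ (-(2:ℝ)) + jap x ^ (-(2:ℝ))) := by
      intro x hx
      obtain ⟨hx1, hx2⟩ := hx
      have e1 : jap x ^ (-q) ≤ 4 ^ q * jap w ^ (-q) :=
        jap_extract (by norm_num) (jap_comp (by norm_num) (by rw [hLdef] at hx1; linarith)) hq0.le
      have e2 : jap (w-x) ^ (-r) ≤ 4 ^ r * jap w ^ (-r) :=
        jap_extract (by norm_num) (jap_comp (by norm_num) (by rw [hLdef] at hx2; linarith)) hr0.le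
      have e3 := kernel_sum_bound (A := α*x+β*w) (x := x) ht
      have hsplit : jap x ^ (-(q+t)) = jap x ^ (-q) * jap x ^ (-t) := by
        rw [show -(q+t) = -q + -t by ring, Real.rpow_add (jap_pos x)]
      rw [hsplit]
      calc jap (α*x+β*w) ^ (-(2-t)) * (jap x ^ (-q) * jap x ^ (-t)) * jap (w-x) ^ (-r)
          = (jap x ^ (-q) * jap (w-x) ^ (-r)) * (jap (α*x+β*w) ^ (-(2-t)) * jap x ^ (-t)) := by
            ring
        _ ≤ ((4 ^ q * jap w ^ (-q)) * (4 ^ r * jap w ^ (-r))) *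
              (jap (α*x+β*w) ^ (-(2:ℝ)) + jap x ^ (-(2:ℝ))) := by
            apply mul_le_mul (mul_le_mul e1 e2 (jap_rpow_nonneg _ _)
                (mul_nonneg (by positivity) (jap_rpow_nonneg _ _))) e3
              (mul_nonneg (jap_rpow_nonneg _ _) (jap_rpow_nonneg _ _))
              (mul_nonneg (mul_nonneg (by positivity) (jap_rpow_nonneg _ _))
                (mul_nonneg (by positivity) (jap_rpow_nonneg _ _)))
        _ = (4 ^ q * 4 ^ r * jap w ^ (-(q+r))) *
              (jap (α*x+β*w) ^ (-(2:ℝ)) + jap x ^ (-(2:ℝ))) := by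
            rw [show -(q+r) = -q + -r by ring, Real.rpow_add (jap_pos w)]; ring
    have hA2 : ∫⁻ x : ℝ, ENNReal.ofReal (jap (α*x+β*w) ^ (-(2:ℝ))) ≤ ENNReal.ofReal C2 := by
      have hαne : α ≠ 0 := by
        intro h; rw [h] at hα; simp at hα; linarith
      have hd : ∀ x : ℝ, jap (α*x+β*w) ^ (-(2:ℝ)) ≤ jap (x - (-(β*w)/α)) ^ (-(2:ℝ)) := by
        intro x
        refine rpow_neg_le (jap_pos _) ?_ (by norm_num)
        have heq : x - (-(β*w)/α) = (α*x+β*w)/α := by field_simp; ring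
        calc jap (x - (-(β*w)/α)) ≤ 1 * jap (α*x+β*w) := by
              refine jap_comp le_rfl ?_
              rw [heq, abs_div, one_mul]
              exact div_le_self (abs_nonneg _) hα
          _ = jap (α*x+β*w) := one_mul _
      calc ∫⁻ x : ℝ, ENNReal.ofReal (jap (α*x+β*w) ^ (-(2:ℝ)))
          ≤ ∫⁻ x : ℝ, ENNReal.ofReal (jap (x - (-(β*w)/α)) ^ (-(2:ℝ))) :=
            lintegral_mono fun x => ENNReal.ofReal_le_ofReal (hd x)
        _ ≤ ENNReal.ofReal C2 := hC2 _
    have hX2 : ∫⁻ x : ℝ, ENNReal.ofReal (jap x ^ (-(2:ℝ))) ≤ ENNReal.ofReal C2 := by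
      calc ∫⁻ x : ℝ, ENNReal.ofReal (jap x ^ (-(2:ℝ)))
          = ∫⁻ x : ℝ, ENNReal.ofReal (jap (x - 0) ^ (-(2:ℝ))) := by simp
        _ ≤ ENNReal.ofReal C2 := hC2 0
    have hKnn : (0:ℝ) ≤ 4 ^ q * 4 ^ r * jap w ^ (-(q+r)) :=
      mul_nonneg (by positivity) (jap_rpow_nonneg _ _)
    calc ∫⁻ x in S1, F x
        ≤ ∫⁻ x in S1, (ENNReal.ofReal (4 ^ q * 4 ^ r * jap w ^ (-(q+r))) *
            (ENNReal.ofReal (jap (α*x+β*w) ^ (-(2:ℝ))) + ENNReal.ofReal (jap x ^ (-(2:ℝ))))) := by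
          refine setLIntegral_mono ?_ fun x hx => ?_
          · refine Measurable.const_mul (Measurable.add (f := fun x => ENNReal.ofReal (jap (α*x+β*w) ^ (-(2:ℝ)))) (g := fun x => ENNReal.ofReal (jap x ^ (-(2:ℝ)))) ?_ ?_) _
            · exact (((jap_rpow_continuous (-(2:ℝ))).comp (by continuity)).measurable).ennreal_ofReal
            · exact (jap_rpow_continuous (-(2:ℝ))).measurable.ennreal_ofReal
          · rw [← ENNReal.ofReal_add (jap_rpow_pos _ _).le (jap_rpow_pos _ _).le,
              ← ENNReal.ofReal_mul hKnn]
            exact ENNReal.ofReal_le_ofReal (hpt x hx)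
      _ = ENNReal.ofReal (4 ^ q * 4 ^ r * jap w ^ (-(q+r))) *
            ∫⁻ x in S1, (ENNReal.ofReal (jap (α*x+β*w) ^ (-(2:ℝ))) +
              ENNReal.ofReal (jap x ^ (-(2:ℝ)))) :=
          lintegral_const_mul' _ _ ENNReal.ofReal_ne_top
      _ ≤ ENNReal.ofReal (4 ^ q * 4 ^ r * jap w ^ (-(q+r))) *
            (ENNReal.ofReal C2 + ENNReal.ofReal C2) := by
          refine mul_le_mul_right ?_ _
          calc ∫⁻ x in S1, (ENNReal.ofReal (jap (α*x+β*w) ^ (-(2:ℝ))) +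
                ENNReal.ofReal (jap x ^ (-(2:ℝ))))
              = (∫⁻ x in S1, ENNReal.ofReal (jap (α*x+β*w) ^ (-(2:ℝ)))) +
                ∫⁻ x in S1, ENNReal.ofReal (jap x ^ (-(2:ℝ))) := by
                refine lintegral_add_right _ ?_
                exact (jap_rpow_continuous (-(2:ℝ))).measurable.ennreal_ofReal
            _ ≤ (∫⁻ x : ℝ, ENNReal.ofReal (jap (α*x+β*w) ^ (-(2:ℝ)))) +
                ∫⁻ x : ℝ, ENNReal.ofReal (jap x ^ (-(2:ℝ))) :=
                add_le_add (setLIntegral_le_lintegral _ _) (setLIntegral_le_lintegral _ _)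
            _ ≤ ENNReal.ofReal C2 + ENNReal.ofReal C2 := add_le_add hA2 hX2
      _ = ENNReal.ofReal (4 ^ q * 4 ^ r * (2 * C2) * jap w ^ (-(q+r))) := by
          rw [← ENNReal.ofReal_add hC2pos.le hC2pos.le, ← ENNReal.ofReal_mul hKnn]
          congr 1; ring
  have hB2 : ∫⁻ x in S2, F x ≤
      ENNReal.ofReal (4 * (4/3) ^ r * D2 * jap w ^ (-(q+r))) := by
    have hpt : ∀ x ∈ S2, jap (α*x+β*w) ^ (-(2-t)) * jap x ^ (-(q+t)) * jap (w-x) ^ (-r)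
        ≤ (4 * (4/3) ^ r * (jap w ^ (-(2-t)) * jap w ^ (-r))) * jap x ^ (-(q+t)) := by
      intro x hx
      rw [hS2def, mem_Icc] at hx
      have habs : |x| ≤ |w|/4 := by rw [abs_le]; rw [hLdef] at hx; exact hx
      have f1 : |w| ≤ (4/3) * |w - x| := by
        have := abs_add_le (w - x) x
        simp only [sub_add_cancel] at this
        linarith
      have e2 : jap (w-x) ^ (-r) ≤ (4/3) ^ r * jap w ^ (-r) :=
        jap_extract (by norm_num) (jap_comp (by norm_num) f1) hr0.le
      have f2 : |w| ≤ 2 * |α*x+β*w| := by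
        have := hgeom w x (Or.inl habs); linarith
      have e1 : jap (α*x+β*w) ^ (-(2-t)) ≤ 2 ^ (2-t) * jap w ^ (-(2-t)) :=
        jap_extract (by norm_num) (jap_comp (by norm_num) f2) (by linarith)
      have e1' : (2:ℝ) ^ (2-t) ≤ 4 := by
        calc (2:ℝ) ^ (2-t) ≤ 2 ^ (2:ℝ) :=
              Real.rpow_le_rpow_of_exponent_le (by norm_num) (by linarith)
          _ = 4 := by
              rw [show (2:ℝ) = ((2:ℕ):ℝ) from by norm_num]
              rw [Real.rpow_natCast]; norm_num
      have e1'' : jap (α*x+β*w) ^ (-(2-t)) ≤ 4 * jap w ^ (-(2-t)) := by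
        calc jap (α*x+β*w) ^ (-(2-t)) ≤ 2 ^ (2-t) * jap w ^ (-(2-t)) := e1
          _ ≤ 4 * jap w ^ (-(2-t)) :=
              mul_le_mul_of_nonneg_right e1' (jap_rpow_pos _ _).le
      calc jap (α*x+β*w) ^ (-(2-t)) * jap x ^ (-(q+t)) * jap (w-x) ^ (-r)
          = (jap (α*x+β*w) ^ (-(2-t)) * jap (w-x) ^ (-r)) * jap x ^ (-(q+t)) := by ring
        _ ≤ ((4 * jap w ^ (-(2-t))) * ((4/3) ^ r * jap w ^ (-r))) * jap x ^ (-(q+t)) := by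
            apply mul_le_mul_of_nonneg_right _ (jap_rpow_nonneg _ _)
            exact mul_le_mul e1'' e2 (jap_rpow_nonneg _ _)
              (mul_nonneg (by norm_num) (jap_rpow_nonneg _ _))
        _ = (4 * (4/3) ^ r * (jap w ^ (-(2-t)) * jap w ^ (-r))) * jap x ^ (-(q+t)) := by ring
    have hKnn : (0:ℝ) ≤ 4 * (4/3) ^ r * (jap w ^ (-(2-t)) * jap w ^ (-r)) :=
      mul_nonneg (by positivity) (mul_nonneg (jap_rpow_nonneg _ _) (jap_rpow_nonneg _ _))
    calc ∫⁻ x in S2, F x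
        ≤ ∫⁻ x in S2, (ENNReal.ofReal (4 * (4/3) ^ r * (jap w ^ (-(2-t)) * jap w ^ (-r))) *
            ENNReal.ofReal (jap x ^ (-(q+t)))) := by
          refine setLIntegral_mono ?_ fun x hx => ?_
          · exact Measurable.const_mul
              ((jap_rpow_continuous _).measurable.ennreal_ofReal) _
          · rw [← ENNReal.ofReal_mul hKnn]
            exact ENNReal.ofReal_le_ofReal (hpt x hx)
      _ = ENNReal.ofReal (4 * (4/3) ^ r * (jap w ^ (-(2-t)) * jap w ^ (-r))) *
            ∫⁻ x in S2, ENNReal.ofReal (jap x ^ (-(q+t))) :=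
          lintegral_const_mul' _ _ ENNReal.ofReal_ne_top
      _ ≤ ENNReal.ofReal (4 * (4/3) ^ r * (jap w ^ (-(2-t)) * jap w ^ (-r))) *
            ENNReal.ofReal (D2 * jap w ^ (1-t)) := mul_le_mul_right (hD2 w) _
      _ ≤ ENNReal.ofReal (4 * (4/3) ^ r * D2 * jap w ^ (-(q+r))) := by
          rw [← ENNReal.ofReal_mul hKnn]
          apply ENNReal.ofReal_le_ofReal
          have hcomb : jap w ^ (-(2-t)) * jap w ^ (-r) * jap w ^ (1-t) = jap w ^ (-(1+r)) := by
            rw [← Real.rpow_add (jap_pos w), ← Real.rpow_add (jap_pos w)]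
            congr 1; ring
          calc 4 * (4/3) ^ r * (jap w ^ (-(2-t)) * jap w ^ (-r)) * (D2 * jap w ^ (1-t))
              = 4 * (4/3) ^ r * D2 * (jap w ^ (-(2-t)) * jap w ^ (-r) * jap w ^ (1-t)) := by ring
            _ = 4 * (4/3) ^ r * D2 * jap w ^ (-(1+r)) := by rw [hcomb]
            _ ≤ 4 * (4/3) ^ r * D2 * jap w ^ (-(q+r)) := by
                apply mul_le_mul_of_nonneg_left (jap_exp_mono (by linarith))
                  (mul_nonneg (by positivity) hD2pos.le)
  have hB3 : ∫⁻ x in S3, F x ≤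
      ENNReal.ofReal ((4/3) ^ (q+t) * 4 * D3 * jap w ^ (-(q+r))) := by
    have hqt0 : 0 ≤ q + t := by linarith
    have hpt : ∀ x ∈ S3, jap (α*x+β*w) ^ (-(2-t)) * jap x ^ (-(q+t)) * jap (w-x) ^ (-r)
        ≤ ((4/3) ^ (q+t) * 4 * (jap w ^ (-(2-t)) * jap w ^ (-(q+t)))) * jap (w-x) ^ (-r) := by
      intro x hx
      rw [hS3def, mem_Icc] at hx
      have hwx : |w - x| ≤ |w|/4 := by
        rw [abs_le]; rw [hLdef] at hx; constructor <;> linarith [hx.1, hx.2]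
      have f1 : |w| ≤ (4/3) * |x| := by
        have := abs_add_le x (w - x)
        simp only [add_sub_cancel] at this
        linarith
      have emid : jap x ^ (-(q+t)) ≤ (4/3) ^ (q+t) * jap w ^ (-(q+t)) :=
        jap_extract (by norm_num) (jap_comp (by norm_num) f1) hqt0
      have f2 : |w| ≤ 2 * |α*x+β*w| := by
        have := hgeom w x (Or.inr hwx); linarith
      have e1 : jap (α*x+β*w) ^ (-(2-t)) ≤ 2 ^ (2-t) * jap w ^ (-(2-t)) :=
        jap_extract (by norm_num) (jap_comp (by norm_num) f2) (by linarith)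
      have e1' : (2:ℝ) ^ (2-t) ≤ 4 := by
        calc (2:ℝ) ^ (2-t) ≤ 2 ^ (2:ℝ) :=
              Real.rpow_le_rpow_of_exponent_le (by norm_num) (by linarith)
          _ = 4 := by
              rw [show (2:ℝ) = ((2:ℕ):ℝ) from by norm_num]
              rw [Real.rpow_natCast]; norm_num
      have e1'' : jap (α*x+β*w) ^ (-(2-t)) ≤ 4 * jap w ^ (-(2-t)) := by
        calc jap (α*x+β*w) ^ (-(2-t)) ≤ 2 ^ (2-t) * jap w ^ (-(2-t)) := e1
          _ ≤ 4 * jap w ^ (-(2-t)) :=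
              mul_le_mul_of_nonneg_right e1' (jap_rpow_pos _ _).le
      calc jap (α*x+β*w) ^ (-(2-t)) * jap x ^ (-(q+t)) * jap (w-x) ^ (-r)
          ≤ ((4 * jap w ^ (-(2-t))) * ((4/3) ^ (q+t) * jap w ^ (-(q+t)))) * jap (w-x) ^ (-r) := by
            apply mul_le_mul_of_nonneg_right _ (jap_rpow_nonneg _ _)
            exact mul_le_mul e1'' emid (jap_rpow_nonneg _ _)
              (mul_nonneg (by norm_num) (jap_rpow_nonneg _ _))
        _ = ((4/3) ^ (q+t) * 4 * (jap w ^ (-(2-t)) * jap w ^ (-(q+t)))) * jap (w-x) ^ (-r) := by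
            ring
    have hKnn : (0:ℝ) ≤ (4/3) ^ (q+t) * 4 * (jap w ^ (-(2-t)) * jap w ^ (-(q+t))) :=
      mul_nonneg (by positivity) (mul_nonneg (jap_rpow_nonneg _ _) (jap_rpow_nonneg _ _))
    calc ∫⁻ x in S3, F x
        ≤ ∫⁻ x in S3, (ENNReal.ofReal ((4/3) ^ (q+t) * 4 * (jap w ^ (-(2-t)) * jap w ^ (-(q+t)))) *
            ENNReal.ofReal (jap (w-x) ^ (-r))) := by
          refine setLIntegral_mono ?_ fun x hx => ?_
          · refine Measurable.const_mul ?_ _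
            exact (((jap_rpow_continuous (-r)).comp (by continuity)).measurable).ennreal_ofReal
          · rw [← ENNReal.ofReal_mul hKnn]
            exact ENNReal.ofReal_le_ofReal (hpt x hx)
      _ = ENNReal.ofReal ((4/3) ^ (q+t) * 4 * (jap w ^ (-(2-t)) * jap w ^ (-(q+t)))) *
            ∫⁻ x in S3, ENNReal.ofReal (jap (w-x) ^ (-r)) :=
          lintegral_const_mul' _ _ ENNReal.ofReal_ne_top
      _ ≤ ENNReal.ofReal ((4/3) ^ (q+t) * 4 * (jap w ^ (-(2-t)) * jap w ^ (-(q+t)))) *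
            ENNReal.ofReal (D3 * jap w ^ (2-r)) := mul_le_mul_right (hD3 w) _
      _ ≤ ENNReal.ofReal ((4/3) ^ (q+t) * 4 * D3 * jap w ^ (-(q+r))) := by
          rw [← ENNReal.ofReal_mul hKnn]
          apply ENNReal.ofReal_le_ofReal
          have hcomb : jap w ^ (-(2-t)) * jap w ^ (-(q+t)) * jap w ^ (2-r) = jap w ^ (-(q+r)) := by
            rw [← Real.rpow_add (jap_pos w), ← Real.rpow_add (jap_pos w)]
            congr 1; ring
          calc (4/3) ^ (q+t) * 4 * (jap w ^ (-(2-t)) * jap w ^ (-(q+t))) * (D3 * jap w ^ (2-r))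
              = (4/3) ^ (q+t) * 4 * D3 *
                  (jap w ^ (-(2-t)) * jap w ^ (-(q+t)) * jap w ^ (2-r)) := by ring
            _ ≤ (4/3) ^ (q+t) * 4 * D3 * jap w ^ (-(q+r)) := by rw [hcomb]
  -- assemble
  calc ∫⁻ x : ℝ, F x
      ≤ ∫⁻ x : ℝ, (S1.indicator F x + S2.indicator F x + S3.indicator F x) :=
        lintegral_mono hcov
    _ = (∫⁻ x : ℝ, (S1.indicator F x + S2.indicator F x)) + ∫⁻ x : ℝ, S3.indicator F x :=
        lintegral_add_right _ (hFm.indicator hS3m)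
    _ = ((∫⁻ x : ℝ, S1.indicator F x) + ∫⁻ x : ℝ, S2.indicator F x) +
          ∫⁻ x : ℝ, S3.indicator F x := by
        rw [lintegral_add_right _ (hFm.indicator hS2m)]
    _ = ((∫⁻ x in S1, F x) + ∫⁻ x in S2, F x) + ∫⁻ x in S3, F x := by
        rw [lintegral_indicator hS1m, lintegral_indicator hS2m, lintegral_indicator hS3m]
    _ ≤ (ENNReal.ofReal (4 ^ q * 4 ^ r * (2 * C2) * jap w ^ (-(q+r))) +
          ENNReal.ofReal (4 * (4/3) ^ r * D2 * jap w ^ (-(q+r)))) +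
          ENNReal.ofReal ((4/3) ^ (q+t) * 4 * D3 * jap w ^ (-(q+r))) :=
        add_le_add (add_le_add hB1 hB2) hB3
    _ = ENNReal.ofReal ((4 ^ q * 4 ^ r * (2 * C2) + 4 * (4/3) ^ r * D2 +
          (4/3) ^ (q+t) * 4 * D3) * jap w ^ (-(q+r))) := by
        have n1 : (0:ℝ) ≤ 4 ^ q * 4 ^ r * (2 * C2) * jap w ^ (-(q+r)) :=
          mul_nonneg (by positivity) (jap_rpow_nonneg _ _)
        have n2 : (0:ℝ) ≤ 4 * (4/3) ^ r * D2 * jap w ^ (-(q+r)) :=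
          mul_nonneg (mul_nonneg (by positivity) hD2pos.le) (jap_rpow_nonneg _ _)
        have n3 : (0:ℝ) ≤ (4/3) ^ (q+t) * 4 * D3 * jap w ^ (-(q+r)) :=
          mul_nonneg (mul_nonneg (by positivity) hD3pos.le) (jap_rpow_nonneg _ _)
        rw [← ENNReal.ofReal_add n1 n2, ← ENNReal.ofReal_add (by linarith) n3]
        congr 1; ring

/-- A weighted convolution estimate: with `η₃ := η − η₁ − η₂`,
`∬ ⟨η+η₂⟩^{−2+k} ⟨η₃−η₁⟩^{−2+j} ⟨η₁⟩^{−κ₁−1/2−j} ⟨η₂⟩^{−κ₂−1/2−k} ⟨η₃⟩^{−κ₃−1/2} dη₁dη₂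
  ≤ C ⟨η⟩^{−3/2−κ₁−κ₂−κ₃}`. -/
theorem weighted_convolution_estimate (κ₁ κ₂ κ₃ : ℝ)
    (hκ₁ : κ₁ ∈ Set.Ioo (-(1 : ℝ) / 2) (1 / 2))
    (hκ₂ : κ₂ ∈ Set.Ioo (-(1 : ℝ) / 2) (1 / 2))
    (hκ₃ : κ₃ ∈ Set.Ioo (-(1 : ℝ) / 2) (1 / 2))
    (k j : ℝ) (hk : k = 0 ∨ k = 1) (hj : j = 0 ∨ j = 1) :
    ∃ C > (0 : ℝ), ∀ η : ℝ,
      (∫⁻ p : ℝ × ℝ, ENNReal.ofReal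
          (jap (η + p.2) ^ (-2 + k) *
            jap ((η - p.1 - p.2) - p.1) ^ (-2 + j) *
            jap p.1 ^ (-κ₁ - 1 / 2 - j) *
            jap p.2 ^ (-κ₂ - 1 / 2 - k) *
            jap (η - p.1 - p.2) ^ (-κ₃ - 1 / 2))) ≤
        ENNReal.ofReal (C * jap η ^ (-(3 : ℝ) / 2 - κ₁ - κ₂ - κ₃)) := by
  obtain ⟨h1l, h1r⟩ := hκ₁
  obtain ⟨h2l, h2r⟩ := hκ₂
  obtain ⟨h3l, h3r⟩ := hκ₃
  -- geometric hypotheses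
  have hgeomA : ∀ w x : ℝ, |x| ≤ |w|/4 ∨ |w - x| ≤ |w|/4 → |w|/2 ≤ |(-2)*x + 1*w| := by
    intro w x h
    have heq : (-2)*x + 1*w = w - 2*x := by ring
    rw [heq]
    rcases h with h | h
    · have h2 : |w| ≤ |w - 2*x| + 2*|x| := by
        calc |w| = |(w - 2*x) + 2*x| := by congr 1; ring
          _ ≤ |w - 2*x| + |2*x| := abs_add_le _ _
          _ = |w - 2*x| + 2*|x| := by rw [abs_mul, abs_two]
      linarith [abs_nonneg w]
    · have h2 : |w| ≤ 2*|w - x| + |w - 2*x| := by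
        calc |w| = |2*(w - x) - (w - 2*x)| := by congr 1; ring
          _ ≤ |2*(w - x)| + |w - 2*x| := abs_sub _ _
          _ = 2*|w - x| + |w - 2*x| := by rw [abs_mul, abs_two]
      linarith [abs_nonneg w]
  have hgeomB : ∀ w x : ℝ, |x| ≤ |w|/4 ∨ |w - x| ≤ |w|/4 → |w|/2 ≤ |1*x + 1*w| := by
    intro w x h
    have heq : 1*x + 1*w = x + w := by ring
    rw [heq]
    rcases h with h | h
    · have h2 : |w| ≤ |x + w| + |x| := by
        calc |w| = |(x + w) - x| := by congr 1; ring
          _ ≤ |x + w| + |x| := abs_sub _ _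
      linarith [abs_nonneg w]
    · have h2 : 2*|w| ≤ |x + w| + |w - x| := by
        calc 2*|w| = |2*w| := by rw [abs_mul, abs_two]
          _ = |(x + w) + (w - x)| := by congr 1; ring
          _ ≤ |x + w| + |w - x| := abs_add_le _ _
      linarith [abs_nonneg w]
  obtain ⟨C1, hC1pos, hC1⟩ := lemG (-2) 1 (κ₁ + 1/2) (κ₃ + 1/2) j (by norm_num) hj
    (by linarith) (by linarith) (by linarith) (by linarith) hgeomA
  obtain ⟨C2, hC2pos, hC2⟩ := lemG 1 1 (κ₂ + 1/2) ((κ₁ + 1/2) + (κ₃ + 1/2)) k (by norm_num) hk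
    (by linarith) (by linarith) (by linarith) (by linarith) hgeomB
  refine ⟨C1 * C2, mul_pos hC1pos hC2pos, fun η => ?_⟩
  have hcont : Continuous fun p : ℝ × ℝ =>
      jap (η + p.2) ^ (-2 + k) * jap ((η - p.1 - p.2) - p.1) ^ (-2 + j) *
        jap p.1 ^ (-κ₁ - 1 / 2 - j) * jap p.2 ^ (-κ₂ - 1 / 2 - k) *
        jap (η - p.1 - p.2) ^ (-κ₃ - 1 / 2) := by
    refine ((((?_ : Continuous _).mul ?_).mul ?_).mul ?_).mul ?_
    · exact (jap_rpow_continuous _).comp (by continuity)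
    · exact (jap_rpow_continuous _).comp (by continuity)
    · exact (jap_rpow_continuous _).comp (by continuity)
    · exact (jap_rpow_continuous _).comp (by continuity)
    · exact (jap_rpow_continuous _).comp (by continuity)
  have hmeas : AEMeasurable (fun p : ℝ × ℝ => ENNReal.ofReal
      (jap (η + p.2) ^ (-2 + k) * jap ((η - p.1 - p.2) - p.1) ^ (-2 + j) *
        jap p.1 ^ (-κ₁ - 1 / 2 - j) * jap p.2 ^ (-κ₂ - 1 / 2 - k) *
        jap (η - p.1 - p.2) ^ (-κ₃ - 1 / 2)))
      ((volume : Measure ℝ).prod (volume : Measure ℝ)) :=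
    hcont.measurable.ennreal_ofReal.aemeasurable
  have tonelli : (∫⁻ p : ℝ × ℝ, ENNReal.ofReal
      (jap (η + p.2) ^ (-2 + k) * jap ((η - p.1 - p.2) - p.1) ^ (-2 + j) *
        jap p.1 ^ (-κ₁ - 1 / 2 - j) * jap p.2 ^ (-κ₂ - 1 / 2 - k) *
        jap (η - p.1 - p.2) ^ (-κ₃ - 1 / 2)))
      = ∫⁻ η₂ : ℝ, ∫⁻ η₁ : ℝ, ENNReal.ofReal
          (jap (η + η₂) ^ (-2 + k) * jap ((η - η₁ - η₂) - η₁) ^ (-2 + j) *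
            jap η₁ ^ (-κ₁ - 1 / 2 - j) * jap η₂ ^ (-κ₂ - 1 / 2 - k) *
            jap (η - η₁ - η₂) ^ (-κ₃ - 1 / 2)) := by
    rw [MeasureTheory.Measure.volume_eq_prod]
    exact lintegral_prod_symm _ hmeas
  rw [tonelli]
  -- inner bound
  have step1 : ∀ η₂ : ℝ, (∫⁻ η₁ : ℝ, ENNReal.ofReal
      (jap (η + η₂) ^ (-2 + k) * jap ((η - η₁ - η₂) - η₁) ^ (-2 + j) *
        jap η₁ ^ (-κ₁ - 1 / 2 - j) * jap η₂ ^ (-κ₂ - 1 / 2 - k) *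
        jap (η - η₁ - η₂) ^ (-κ₃ - 1 / 2)))
      ≤ ENNReal.ofReal (C1 * (jap (1*η₂ + 1*η) ^ (-(2 - k)) *
          jap η₂ ^ (-((κ₂ + 1/2) + k)) *
          jap (η - η₂) ^ (-((κ₁ + 1/2) + (κ₃ + 1/2))))) := by
    intro η₂
    have hA : 0 ≤ jap (1*η₂ + 1*η) ^ (-(2 - k)) * jap η₂ ^ (-((κ₂ + 1/2) + k)) :=
      mul_nonneg (jap_rpow_nonneg _ _) (jap_rpow_nonneg _ _)
    calc (∫⁻ η₁ : ℝ, ENNReal.ofReal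
        (jap (η + η₂) ^ (-2 + k) * jap ((η - η₁ - η₂) - η₁) ^ (-2 + j) *
          jap η₁ ^ (-κ₁ - 1 / 2 - j) * jap η₂ ^ (-κ₂ - 1 / 2 - k) *
          jap (η - η₁ - η₂) ^ (-κ₃ - 1 / 2)))
        = ∫⁻ η₁ : ℝ, (ENNReal.ofReal (jap (1*η₂ + 1*η) ^ (-(2 - k)) *
            jap η₂ ^ (-((κ₂ + 1/2) + k))) *
          ENNReal.ofReal (jap ((-2)*η₁ + 1*(η - η₂)) ^ (-(2 - j)) *
            jap η₁ ^ (-((κ₁ + 1/2) + j)) * jap ((η - η₂) - η₁) ^ (-(κ₃ + 1/2)))) := by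
          refine lintegral_congr fun η₁ => ?_
          rw [← ENNReal.ofReal_mul hA]
          congr 1
          rw [show (-2)*η₁ + 1*(η - η₂) = (η - η₁ - η₂) - η₁ by ring,
            show 1*η₂ + 1*η = η + η₂ by ring,
            show (η - η₂) - η₁ = η - η₁ - η₂ by ring,
            show -(2 - j) = -2 + j by ring,
            show -(2 - k) = -2 + k by ring,
            show -((κ₁ + 1/2) + j) = -κ₁ - 1/2 - j by ring,
            show -((κ₂ + 1/2) + k) = -κ₂ - 1/2 - k by ring,
            show -(κ₃ + 1/2) = -κ₃ - 1/2 by ring]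
          ring
      _ = ENNReal.ofReal (jap (1*η₂ + 1*η) ^ (-(2 - k)) * jap η₂ ^ (-((κ₂ + 1/2) + k))) *
            ∫⁻ η₁ : ℝ, ENNReal.ofReal (jap ((-2)*η₁ + 1*(η - η₂)) ^ (-(2 - j)) *
              jap η₁ ^ (-((κ₁ + 1/2) + j)) * jap ((η - η₂) - η₁) ^ (-(κ₃ + 1/2))) :=
          lintegral_const_mul' _ _ ENNReal.ofReal_ne_top
      _ ≤ ENNReal.ofReal (jap (1*η₂ + 1*η) ^ (-(2 - k)) * jap η₂ ^ (-((κ₂ + 1/2) + k))) *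
            ENNReal.ofReal (C1 * jap (η - η₂) ^ (-((κ₁ + 1/2) + (κ₃ + 1/2)))) :=
          mul_le_mul_right (hC1 (η - η₂)) _
      _ = ENNReal.ofReal (C1 * (jap (1*η₂ + 1*η) ^ (-(2 - k)) *
            jap η₂ ^ (-((κ₂ + 1/2) + k)) *
            jap (η - η₂) ^ (-((κ₁ + 1/2) + (κ₃ + 1/2))))) := by
          rw [← ENNReal.ofReal_mul hA]
          congr 1
          ring
  calc (∫⁻ η₂ : ℝ, ∫⁻ η₁ : ℝ, ENNReal.ofReal
        (jap (η + η₂) ^ (-2 + k) * jap ((η - η₁ - η₂) - η₁) ^ (-2 + j) *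
          jap η₁ ^ (-κ₁ - 1 / 2 - j) * jap η₂ ^ (-κ₂ - 1 / 2 - k) *
          jap (η - η₁ - η₂) ^ (-κ₃ - 1 / 2)))
      ≤ ∫⁻ η₂ : ℝ, ENNReal.ofReal (C1 * (jap (1*η₂ + 1*η) ^ (-(2 - k)) *
          jap η₂ ^ (-((κ₂ + 1/2) + k)) *
          jap (η - η₂) ^ (-((κ₁ + 1/2) + (κ₃ + 1/2))))) := lintegral_mono step1
    _ = ENNReal.ofReal C1 * ∫⁻ η₂ : ℝ, ENNReal.ofReal (jap (1*η₂ + 1*η) ^ (-(2 - k)) *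
          jap η₂ ^ (-((κ₂ + 1/2) + k)) *
          jap (η - η₂) ^ (-((κ₁ + 1/2) + (κ₃ + 1/2)))) := by
        rw [← lintegral_const_mul' _ _ ENNReal.ofReal_ne_top]
        refine lintegral_congr fun η₂ => ?_
        rw [← ENNReal.ofReal_mul hC1pos.le]
    _ ≤ ENNReal.ofReal C1 * ENNReal.ofReal (C2 * jap η ^ (-((κ₂ + 1/2) + ((κ₁ + 1/2) + (κ₃ + 1/2))))) :=
        mul_le_mul_right (hC2 η) _
    _ = ENNReal.ofReal (C1 * C2 * jap η ^ (-(3 : ℝ) / 2 - κ₁ - κ₂ - κ₃)) := by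
        rw [← ENNReal.ofReal_mul hC1pos.le,
          show -((κ₂ + 1/2) + ((κ₁ + 1/2) + (κ₃ + 1/2))) = -(3 : ℝ) / 2 - κ₁ - κ₂ - κ₃ by ring]
        congr 1
        ring
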